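/- Let M be a simple binary matroid on ground set E in which every two distinct elements appear together in a triangle (a circuit of cardinality three). Then M is a projective geometry over GF(2); that is, for some r, M is isomorphic to the binary matroid represented by the matrix whose columns are all the 2^r - 1 nonzero vectors of GF(2)^r. -/

import Mathlib

/-- A binary matroid, given by its ground set and its cycle space (a GF(2)-subspace,
presented as a family of subsets of the ground set containing `∅` and closed under
symmetric difference). -/
structure BinaryMatroid (α : Type*) [DecidableEq α] where
  E : Finset α
  cycles : Set (Finset α)
  subset_ground : ∀ C ∈ cycles, C ⊆ E
  empty_mem : ∅ ∈ cycles
  symmDiff_mem : ∀ C ∈ cycles, ∀ D ∈ cycles, symmDiff C D ∈ cycles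

variable {α : Type*} [DecidableEq α]

/-- A circuit: a minimal nonempty cycle. -/
def BinaryMatroid.IsCircuit (M : BinaryMatroid α) (C : Finset α) : Prop :=
  C ∈ M.cycles ∧ C.Nonempty ∧ ∀ C' ∈ M.cycles, C'.Nonempty → C' ⊆ C → C' = C

/-- Every nonempty cycle contains a circuit. -/
lemma BinaryMatroid.exists_circuit (M : BinaryMatroid α) :
    ∀ C ∈ M.cycles, C.Nonempty → ∃ D, D ⊆ C ∧ M.IsCircuit D := by
  intro C
  induction C using Finset.strongInduction with
  | _ C ih =>
    intro hC hne
    by_cases h : ∀ C' ∈ M.cycles, C'.Nonempty → C' ⊆ C → C' = C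
    · exact ⟨C, Finset.Subset.refl C, hC, hne, h⟩
    · push_neg at h
      obtain ⟨C', hC', hne', hsub, hne2⟩ := h
      obtain ⟨D, hD1, hD2⟩ := ih C' (Finset.ssubset_iff_subset_ne.mpr ⟨hsub, hne2⟩) hC' hne'
      exact ⟨D, hD1.trans hsub, hD2⟩

/-- A simple binary matroid in which every two distinct elements lie together in
a triangle (a circuit of cardinality 3) is a projective geometry over GF(2): for some `r` it is
isomorphic to the binary matroid represented by the matrix whose columns are all nonzero
vectors of `GF(2)^r` (so cycles correspond to sets of column vectors summing to zero). -/
theorem stmt_12 (M : BinaryMatroid α)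
    (hsimple : ∀ C, M.IsCircuit C → 2 < C.card)
    (htri : ∀ e ∈ M.E, ∀ f ∈ M.E, e ≠ f →
      ∃ C, M.IsCircuit C ∧ C.card = 3 ∧ e ∈ C ∧ f ∈ C) :
    ∃ (r : ℕ) (φ : α → (Fin r → ZMod 2)),
      Set.InjOn φ ↑M.E ∧
      φ '' ↑M.E = {v : Fin r → ZMod 2 | v ≠ 0} ∧
      ∀ C ⊆ M.E, (C ∈ M.cycles ↔ ∑ x ∈ C, φ x = 0) := by
  classical
  -- every nonempty cycle has more than 2 elements
  have hbig : ∀ C ∈ M.cycles, C.Nonempty → 2 < C.card := by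
    intro C hC hne
    obtain ⟨D, hDC, hD⟩ := M.exists_circuit C hC hne
    exact lt_of_lt_of_le (hsimple D hD) (Finset.card_le_card hDC)
  -- indicator vectors
  set χ : Finset α → ({x // x ∈ M.E} → ZMod 2) :=
    fun C x => if ↑x ∈ C then 1 else 0 with hχ
  have hχadd : ∀ C D, χ (symmDiff C D) = χ C + χ D := by
    intro C D
    funext x
    simp only [hχ, Finset.mem_symmDiff, Pi.add_apply]
    by_cases hC : ↑x ∈ C <;> by_cases hD : ↑x ∈ D <;> simp [hC, hD] <;> decide
  have hχinj : ∀ C ⊆ M.E, ∀ D ⊆ M.E, χ C = χ D → C = D := by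
    intro C hCE D hDE h
    ext a
    constructor
    · intro ha
      have hx := congrFun h ⟨a, hCE ha⟩
      simp only [hχ, ha, if_true] at hx
      by_contra hd
      simp [hd] at hx
    · intro ha
      have hx := congrFun h ⟨a, hDE ha⟩
      simp only [hχ, ha, if_true] at hx
      by_contra hd
      simp [hd] at hx
  have hχsum : ∀ C : Finset α, (∑ x ∈ C, χ {x}) = χ C := by
    intro C
    funext y
    rw [Finset.sum_apply]
    simp only [hχ, Finset.mem_singleton]
    exact Finset.sum_ite_eq C (↑y) (fun _ => (1 : ZMod 2))
  have hzmod : ∀ c : ZMod 2, c = 0 ∨ c = 1 := by decide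
  -- the cycle space as a submodule
  let Z : Submodule (ZMod 2) ({x // x ∈ M.E} → ZMod 2) :=
    { carrier := χ '' M.cycles
      add_mem' := by
        rintro _ _ ⟨C, hC, rfl⟩ ⟨D, hD, rfl⟩
        exact ⟨symmDiff C D, M.symmDiff_mem C hC D hD, hχadd C D⟩
      zero_mem' := ⟨∅, M.empty_mem, by funext x; simp [hχ]⟩
      smul_mem' := by
        intro c x hx
        rcases hzmod c with rfl | rfl
        · rw [zero_smul]
          exact ⟨∅, M.empty_mem, by funext x; simp [hχ]⟩
        · rwa [one_smul] }
  have hZmem : ∀ C ⊆ M.E, (χ C ∈ Z ↔ C ∈ M.cycles) := by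
    intro C hCE
    constructor
    · rintro ⟨D, hD, hDC⟩
      rwa [hχinj D (M.subset_ground D hD) C hCE hDC] at hD
    · intro h
      exact ⟨C, h, rfl⟩
  -- the representation
  let b := Module.finBasis (ZMod 2) (({x // x ∈ M.E} → ZMod 2) ⧸ Z)
  set r := Module.finrank (ZMod 2) (({x // x ∈ M.E} → ZMod 2) ⧸ Z) with hr
  let L : ({x // x ∈ M.E} → ZMod 2) →ₗ[ZMod 2] (Fin r → ZMod 2) :=
    (b.equivFun.toLinearMap).comp Z.mkQ
  have hker : ∀ x, L x = 0 ↔ x ∈ Z := by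
    intro x
    rw [show L x = b.equivFun (Z.mkQ x) from rfl, LinearEquiv.map_eq_zero_iff,
      Submodule.mkQ_apply, Submodule.Quotient.mk_eq_zero]
  have hLsurj : Function.Surjective L :=
    b.equivFun.surjective.comp (Submodule.mkQ_surjective Z)
  set φ : α → (Fin r → ZMod 2) :=
    fun a => if h : a ∈ M.E then L (χ {a}) else 0 with hφ
  have hφE : ∀ a ∈ M.E, φ a = L (χ {a}) := by
    intro a ha
    rw [hφ]; exact dif_pos ha
  have hsum : ∀ C ⊆ M.E, ∑ x ∈ C, φ x = L (χ C) := by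
    intro C hCE
    rw [← hχsum C, map_sum]
    exact Finset.sum_congr rfl fun x hx => hφE x (hCE hx)
  have hcyc : ∀ C ⊆ M.E, (C ∈ M.cycles ↔ ∑ x ∈ C, φ x = 0) := by
    intro C hCE
    rw [hsum C hCE, hker, hZmem C hCE]
  -- pair indicator
  have hχpair : ∀ a b : α, a ≠ b → χ {a, b} = χ {a} + χ {b} := by
    intro a b hab
    funext x
    simp only [hχ, Finset.mem_insert, Finset.mem_singleton, Pi.add_apply]
    by_cases h1 : (↑x : α) = a <;> by_cases h2 : (↑x : α) = b
    · exact absurd (h1.symm.trans h2) hab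
    · simp [h1, h2, hab]
    · simp [h1, h2, hab.symm]
    · simp [h1, h2]
  -- nonzero
  have hφne : ∀ a ∈ M.E, φ a ≠ 0 := by
    intro a ha h0
    rw [hφE a ha, hker] at h0
    have h1 : ({a} : Finset α) ∈ M.cycles :=
      (hZmem {a} (by simpa using ha)).mp h0
    have := hbig {a} h1 (Finset.singleton_nonempty a)
    simp at this
  -- injectivity
  have hinj : Set.InjOn φ ↑M.E := by
    intro a ha b hb hab
    simp only [Finset.coe_mem, Finset.mem_coe] at ha hb
    by_contra hne
    have hpair : ({a, b} : Finset α) ⊆ M.E := by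
      intro x hx
      rcases Finset.mem_insert.mp hx with rfl | hx
      · exact ha
      · rw [Finset.mem_singleton.mp hx]; exact hb
    have h0 : L (χ {a, b}) = 0 := by
      rw [hχpair a b hne, map_add, ← hφE a ha, ← hφE b hb, hab]
      funext i
      have : ∀ z : ZMod 2, z + z = 0 := by decide
      exact this _
    rw [hker, hZmem _ hpair] at h0
    have := hbig _ h0 ⟨a, Finset.mem_insert_self a _⟩
    have hc : ({a, b} : Finset α).card ≤ 2 := Finset.card_insert_le a {b} |>.trans (by simp)
    omega
  -- span
  have hspan : Submodule.span (ZMod 2) (φ '' ↑M.E) = ⊤ := by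
    have himg : φ '' ↑M.E = L '' (Set.range fun x : {x // x ∈ M.E} => χ {↑x}) := by
      ext v
      constructor
      · rintro ⟨a, ha, rfl⟩
        simp only [Finset.mem_coe] at ha
        exact ⟨χ {a}, ⟨⟨a, ha⟩, rfl⟩, (hφE a ha).symm⟩
      · rintro ⟨_, ⟨x, rfl⟩, rfl⟩
        exact ⟨↑x, by simp, hφE ↑x x.2⟩
    have hsingle : (Set.range fun x : {x // x ∈ M.E} => χ {↑x}) =
        Set.range (Pi.basisFun (ZMod 2) {x // x ∈ M.E}) := by
      apply congrArg Set.range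
      funext x
      rw [Pi.basisFun_apply]
      funext y
      simp only [hχ, Finset.mem_singleton, Pi.single_apply, Subtype.ext_iff]
    rw [himg, Submodule.span_image, hsingle, Module.Basis.span_eq, Submodule.map_top,
      LinearMap.range_eq_top.mpr hLsurj]
  -- closure under addition of distinct elements
  have hclosed : ∀ v ∈ φ '' ↑M.E, ∀ w ∈ φ '' ↑M.E, v ≠ w → v + w ∈ φ '' ↑M.E := by
    rintro _ ⟨a, ha, rfl⟩ _ ⟨b, hb, rfl⟩ hvw
    simp only [Finset.mem_coe] at ha hb
    have hab : a ≠ b := fun h => hvw (by rw [h])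
    obtain ⟨C, hC, hcard, haC, hbC⟩ := htri a ha b hb hab
    have hCE := M.subset_ground C hC.1
    have hsum0 : ∑ x ∈ C, φ x = 0 := (hcyc C hCE).mp hC.1
    -- find the third element
    have hbmem : b ∈ C.erase a := Finset.mem_erase.mpr ⟨hab.symm, hbC⟩
    have hcard2 : ((C.erase a).erase b).card = 1 := by
      rw [Finset.card_erase_of_mem hbmem, Finset.card_erase_of_mem haC, hcard]
    obtain ⟨c, hc⟩ := Finset.card_eq_one.mp hcard2
    have hcmem : c ∈ (C.erase a).erase b := hc ▸ Finset.mem_singleton_self c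
    have hcb : c ≠ b := (Finset.mem_erase.mp hcmem).1
    have hca : c ≠ a := (Finset.mem_erase.mp (Finset.mem_erase.mp hcmem).2).1
    have hcC : c ∈ C := Finset.mem_of_mem_erase (Finset.mem_of_mem_erase hcmem)
    have hCeq : C = {a, b, c} := by
      apply (Finset.eq_of_subset_of_card_le _ _).symm
      · intro x hx
        simp only [Finset.mem_insert, Finset.mem_singleton] at hx
        rcases hx with rfl | rfl | rfl
        · exact haC
        · exact hbC
        · exact hcC
      · rw [hcard]
        rw [Finset.card_insert_of_notMem (by simp [hab, hca.symm]),
          Finset.card_insert_of_notMem (by simp [hcb.symm]), Finset.card_singleton]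
    have h3 : φ a + (φ b + φ c) = 0 := by
      rw [← hsum0, hCeq, Finset.sum_insert (by simp [hab, hca.symm]),
        Finset.sum_insert (by simp [hcb.symm]), Finset.sum_singleton]
    have key : ∀ x y z : ZMod 2, x + (y + z) = 0 → x + y = z := by decide
    have : φ a + φ b = φ c := by
      funext i
      exact key _ _ _ (congrFun h3 i)
    rw [this]
    exact ⟨c, Finset.mem_coe.mpr (hCE hcC), rfl⟩
  -- image is exactly the nonzero vectors
  have himg : φ '' ↑M.E = {v : Fin r → ZMod 2 | v ≠ 0} := by
    apply Set.Subset.antisymm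
    · rintro _ ⟨a, ha, rfl⟩
      exact hφne a (Finset.mem_coe.mp ha)
    · intro v hv
      have hvspan : v ∈ Submodule.span (ZMod 2) (φ '' ↑M.E) := by
        rw [hspan]; trivial
      have hcases : ∀ w ∈ Submodule.span (ZMod 2) (φ '' ↑M.E),
          w = 0 ∨ w ∈ φ '' ↑M.E := by
        intro w hw
        induction hw using Submodule.span_induction with
        | mem x hx => exact Or.inr hx
        | zero => exact Or.inl rfl
        | add x y hx hy ihx ihy =>
          rcases ihx with rfl | ihx
          · rcases ihy with rfl | ihy
            · exact Or.inl (by rw [add_zero])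
            · rw [zero_add]; exact Or.inr ihy
          · rcases ihy with rfl | ihy
            · rw [add_zero]; exact Or.inr ihx
            · by_cases hxy : x = y
              · subst hxy
                left
                funext i
                have : ∀ z : ZMod 2, z + z = 0 := by decide
                exact this _
              · exact Or.inr (hclosed x ihx y ihy hxy)
        | smul c x hx ihx =>
          rcases hzmod c with rfl | rfl
          · exact Or.inl (zero_smul _ _)
          · rwa [one_smul]
      rcases hcases v hvspan with rfl | h
      · exact absurd rfl hv
      · exact h
  exact ⟨r, φ, hinj, himg, hcyc⟩
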